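/- If X = (V, E) is a digraph that is not a disjoint union of directed paths, then for every coloring f : V → ℤ⁺: N(f, X) = Σ_{S ⊆ E, S ≠ ∅} (−1)^{|S|−1} N(f, X∖S), where X∖S = (V, E∖S). (Equivalently, W_X = Σ_{S ⊆ E, S ≠ ∅} (−1)^{|S|−1} W_{X∖S}.) -/

import Mathlib

/-- A `V`-listing `σ` (a bijection `Fin (Fintype.card V) ≃ V`) is `(f, X)`-friendly for the digraph with
edge set `E` and the coloring `f` if the colors are weakly increasing along the listing,
and strictly increase along every edge of the digraph. -/
def Friendly {V : Type*} [Fintype V] (E : Set (V × V)) (f : V → ℕ+)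
    (σ : Fin (Fintype.card V) ≃ V) : Prop :=
  Monotone (fun i => f (σ i)) ∧
  ∀ i : Fin (Fintype.card V), ∀ h : (i : ℕ) + 1 < Fintype.card V,
    (σ i, σ ⟨(i : ℕ) + 1, h⟩) ∈ E → f (σ i) < f (σ ⟨(i : ℕ) + 1, h⟩)

/-- `redeiBergeCount E f` is `N(f, X)`, the number of `(f, X)`-friendly `V`-listings
of the digraph `X = (V, E)`. -/
noncomputable def redeiBergeCount {V : Type*} [Fintype V] (E : Set (V × V)) (f : V → ℕ+) : ℕ :=
  Nat.card {σ : Fin (Fintype.card V) ≃ V // Friendly E f σ}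

/-- A digraph `(V, F)` is a disjoint union of directed paths if every vertex has at most
one outgoing and at most one incoming edge, and `F` contains no directed cycle. -/
def IsDisjointUnionOfPaths {V : Type*} (F : Set (V × V)) : Prop :=
  (∀ u v w : V, (u, v) ∈ F → (u, w) ∈ F → v = w) ∧
  (∀ u v w : V, (u, w) ∈ F → (v, w) ∈ F → u = v) ∧
  ¬ ∃ k : ℕ, ∃ hk : 0 < k, ∃ c : Fin k → V, Function.Injective c ∧
      ∀ i : Fin k, (c i, c ⟨((i : ℕ) + 1) % k, Nat.mod_lt _ hk⟩) ∈ F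

/-- Key inclusion-exclusion sum. -/
lemma key_sum {α : Type*} [DecidableEq α] (E T : Finset α) (hTE : T ⊆ E)
    (hEne : E ≠ ∅) (hTne : T ≠ E) :
    ∑ S ∈ E.powerset.erase ∅, (if T ⊆ S then (-1 : ℤ) ^ (S.card - 1) else 0)
      = if T = ∅ then 1 else 0 := by
  by_cases hT : T = ∅
  · subst hT
    simp only [Finset.empty_subset, if_true, if_pos rfl]
    have h1 : ∑ S ∈ E.powerset.erase ∅, (-1 : ℤ) ^ (S.card - 1)
        = -∑ S ∈ E.powerset.erase ∅, (-1 : ℤ) ^ S.card := by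
      rw [← Finset.sum_neg_distrib]
      refine Finset.sum_congr rfl fun S hS => ?_
      have hSne : S ≠ ∅ := (Finset.mem_erase.1 hS).1
      have hc : 1 ≤ S.card := Finset.card_pos.2 (Finset.nonempty_iff_ne_empty.2 hSne)
      have h : (-1 : ℤ) ^ S.card = -(-1 : ℤ) ^ (S.card - 1) := by
        conv_lhs => rw [show S.card = (S.card - 1) + 1 from (Nat.succ_pred_eq_of_pos hc).symm]
        rw [pow_succ]; ring
      rw [h]; ring
    have h2 : ∑ S ∈ E.powerset.erase ∅, (-1 : ℤ) ^ S.card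
        = (∑ S ∈ E.powerset, (-1 : ℤ) ^ S.card) - 1 := by
      have : E.powerset = insert ∅ (E.powerset.erase ∅) :=
        (Finset.insert_erase (Finset.empty_mem_powerset E)).symm
      rw [this, Finset.sum_insert (Finset.notMem_erase _ _)]
      simp
    rw [h1, h2, Finset.sum_powerset_neg_one_pow_card, if_neg hEne]
    ring
  · rw [if_neg hT]
    rw [← Finset.sum_filter]
    have hfil : (E.powerset.erase ∅).filter (fun S => T ⊆ S)
        = (E.powerset).filter (fun S => T ⊆ S) := by
      ext S
      simp only [Finset.mem_filter, Finset.mem_erase, Finset.mem_powerset]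
      constructor
      · rintro ⟨⟨-, h1⟩, h2⟩; exact ⟨h1, h2⟩
      · rintro ⟨h1, h2⟩
        refine ⟨⟨?_, h1⟩, h2⟩
        rintro rfl
        exact hT (Finset.subset_empty.1 h2)
    rw [hfil]
    have hTc : 1 ≤ T.card := Finset.card_pos.2 (Finset.nonempty_iff_ne_empty.2 hT)
    have := Finset.sum_nbij' (s := (E.powerset).filter (fun S => T ⊆ S))
      (t := (E \ T).powerset)
      (f := fun S => (-1 : ℤ) ^ (S.card - 1))
      (g := fun R => (-1 : ℤ) ^ (T.card - 1) * (-1 : ℤ) ^ R.card)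
      (fun S => S \ T) (fun R => R ∪ T)
      ?_ ?_ ?_ ?_ ?_
    · rw [this, ← Finset.mul_sum, Finset.sum_powerset_neg_one_pow_card, if_neg, mul_zero]
      intro h
      exact hTne (le_antisymm hTE (fun x hx => by
        by_contra hxT
        exact absurd (Finset.mem_sdiff.2 ⟨hx, hxT⟩) (by simp [h])))
    · intro S hS
      simp only [Finset.mem_filter, Finset.mem_powerset] at hS ⊢
      exact Finset.sdiff_subset_sdiff hS.1 le_rfl
    · intro R hR
      simp only [Finset.mem_powerset] at hR
      simp only [Finset.mem_filter, Finset.mem_powerset]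
      exact ⟨Finset.union_subset (hR.trans (Finset.sdiff_subset)) hTE, Finset.subset_union_right⟩
    · intro S hS
      simp only [Finset.mem_filter, Finset.mem_powerset] at hS
      exact Finset.sdiff_union_of_subset hS.2
    · intro R hR
      simp only [Finset.mem_powerset] at hR
      have hdisj : Disjoint R T := Finset.disjoint_left.2 fun x hx =>
        (Finset.mem_sdiff.1 (hR hx)).2
      rw [Finset.union_sdiff_right, Finset.sdiff_eq_self_of_disjoint hdisj]
    · intro S hS
      simp only [Finset.mem_filter, Finset.mem_powerset] at hS
      rw [Finset.card_sdiff_of_subset hS.2, ← pow_add]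
      congr 1
      have h1 := Finset.card_le_card hS.2
      omega

open Classical in
lemma redeiBergeCount_eq_sum {V : Type*} [Fintype V] [DecidableEq V] (E' : Set (V × V))
    (f : V → ℕ+) :
    (redeiBergeCount E' f : ℤ) =
      ∑ σ : Fin (Fintype.card V) ≃ V, if Friendly E' f σ then (1 : ℤ) else 0 := by
  rw [Finset.sum_boole, redeiBergeCount, Nat.card_eq_fintype_card, Fintype.card_subtype]

/-- If `X = (V, E)` is a digraph that is not a disjoint union of directed paths, then for
every coloring `f`: `N(f, X) = Σ_{∅ ≠ S ⊆ E} (−1)^{|S|−1} N(f, X∖S)`. -/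
theorem redeiBergeCount_decomposition {V : Type*} [Fintype V] [DecidableEq V]
    (E : Finset (V × V))
    (hE : ¬ IsDisjointUnionOfPaths (E : Set (V × V))) (f : V → ℕ+) :
    (redeiBergeCount (E : Set (V × V)) f : ℤ) =
      ∑ S ∈ E.powerset.erase ∅,
        (-1 : ℤ) ^ (S.card - 1) * (redeiBergeCount ((E \ S : Finset (V × V)) : Set (V × V)) f : ℤ) := by
  classical
  have hEne : E ≠ ∅ := by
    rintro rfl
    refine hE ⟨by simp, by simp, ?_⟩
    rintro ⟨k, hk, c, -, hc⟩
    have := hc ⟨0, hk⟩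
    simp at this
  rw [redeiBergeCount_eq_sum]
  rw [show ∑ S ∈ E.powerset.erase ∅,
        (-1 : ℤ) ^ (S.card - 1) * (redeiBergeCount ((E \ S : Finset (V × V)) : Set (V × V)) f : ℤ)
      = ∑ S ∈ E.powerset.erase ∅, ∑ σ : Fin (Fintype.card V) ≃ V,
          (-1 : ℤ) ^ (S.card - 1) *
            (if Friendly ((E \ S : Finset (V × V)) : Set (V × V)) f σ then (1 : ℤ) else 0) from
    Finset.sum_congr rfl fun S _ => by rw [redeiBergeCount_eq_sum, Finset.mul_sum]]
  rw [Finset.sum_comm]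
  refine Finset.sum_congr rfl fun σ _ => ?_
  set T : Finset (V × V) := E.filter (fun e => ∃ i : Fin (Fintype.card V), ∃ h : (i : ℕ) + 1 < Fintype.card V,
      e = (σ i, σ ⟨(i : ℕ) + 1, h⟩) ∧ ¬ f (σ i) < f (σ ⟨(i : ℕ) + 1, h⟩)) with hTdef
  have hTE : T ⊆ E := Finset.filter_subset _ _
  -- characterization of friendliness for E \ S
  have hFr : ∀ S : Finset (V × V),
      Friendly ((E \ S : Finset (V × V)) : Set (V × V)) f σ ↔
        (Monotone (fun i => f (σ i)) ∧ T ⊆ S) := by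
    intro S
    constructor
    · rintro ⟨hm, hstrict⟩
      refine ⟨hm, fun e he => ?_⟩
      obtain ⟨heE, i, h, rfl, hlt⟩ := Finset.mem_filter.1 he
      by_contra heS
      exact hlt (hstrict i h (by
        simp only [Finset.coe_sdiff, Set.mem_diff, Finset.mem_coe]
        exact ⟨heE, heS⟩))
    · rintro ⟨hm, hTS⟩
      refine ⟨hm, fun i h hmem => ?_⟩
      simp only [Finset.coe_sdiff, Set.mem_diff, Finset.mem_coe] at hmem
      by_contra hlt
      exact hmem.2 (hTS (Finset.mem_filter.2 ⟨hmem.1, i, h, rfl, hlt⟩))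
  have hFrE : Friendly (E : Set (V × V)) f σ ↔
      (Monotone (fun i => f (σ i)) ∧ T = ∅) := by
    have := hFr ∅
    rw [Finset.sdiff_empty] at this
    simpa [Finset.subset_empty] using this
  have hTne : T ≠ E := by
    intro hTEeq
    apply hE
    have hform : ∀ e ∈ E, ∃ i : Fin (Fintype.card V), ∃ h : (i : ℕ) + 1 < Fintype.card V,
        e = (σ i, σ ⟨(i : ℕ) + 1, h⟩) := by
      intro e he
      rw [← hTEeq] at he
      obtain ⟨-, i, h, heq, -⟩ := Finset.mem_filter.1 he
      exact ⟨i, h, heq⟩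
    refine ⟨?_, ?_, ?_⟩
    · intro u v w huv huw
      obtain ⟨i, hi, hq1⟩ := hform _ huv
      obtain ⟨j, hj, hq2⟩ := hform _ huw
      obtain ⟨e1, e2⟩ := Prod.mk.injEq .. ▸ hq1
      obtain ⟨e3, e4⟩ := Prod.mk.injEq .. ▸ hq2
      have hij : i = j := σ.injective (e1 ▸ e3 ▸ rfl)
      subst hij
      rw [e2, e4]
    · intro u v w huw hvw
      obtain ⟨i, hi, hq1⟩ := hform _ huw
      obtain ⟨j, hj, hq2⟩ := hform _ hvw
      obtain ⟨e1, e2⟩ := Prod.mk.injEq .. ▸ hq1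
      obtain ⟨e3, e4⟩ := Prod.mk.injEq .. ▸ hq2
      have : (⟨(i : ℕ) + 1, hi⟩ : Fin (Fintype.card V)) = ⟨(j : ℕ) + 1, hj⟩ :=
        σ.injective (e2 ▸ e4 ▸ rfl)
      have hij : i = j := by
        apply Fin.ext
        have := Fin.mk.injEq .. ▸ this
        omega
      subst hij
      rw [e1, e3]
    · rintro ⟨k, hk, c, hcinj, hcyc⟩
      obtain ⟨i0, -, hmax⟩ := Finset.exists_max_image Finset.univ
        (fun i => ((σ.symm (c i)) : ℕ)) ⟨⟨0, hk⟩, Finset.mem_univ _⟩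
      obtain ⟨j, hj, heq⟩ := hform _ (hcyc i0)
      obtain ⟨e1, e2⟩ := Prod.mk.injEq .. ▸ heq
      have h1 : ((σ.symm (c i0)) : ℕ) = (j : ℕ) := by rw [e1, Equiv.symm_apply_apply]
      have h2 : ((σ.symm (c ⟨((i0 : ℕ) + 1) % k, Nat.mod_lt _ hk⟩)) : ℕ) = (j : ℕ) + 1 := by
        rw [e2, Equiv.symm_apply_apply]
      have := hmax ⟨((i0 : ℕ) + 1) % k, Nat.mod_lt _ hk⟩ (Finset.mem_univ _)
      omega
  by_cases hmono : Monotone (fun i => f (σ i))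
  · have hL : (if Friendly (E : Set (V × V)) f σ then (1 : ℤ) else 0)
        = if T = ∅ then 1 else 0 := by
      by_cases h : T = ∅ <;> simp [hFrE, hmono, h]
    rw [hL, ← key_sum E T hTE hEne hTne]
    refine Finset.sum_congr rfl fun S hS => ?_
    by_cases h : T ⊆ S
    · rw [if_pos h, if_pos ((hFr S).2 ⟨hmono, h⟩), mul_one]
    · rw [if_neg h, if_neg (fun hf => h ((hFr S).1 hf).2), mul_zero]
  · have hL : (if Friendly (E : Set (V × V)) f σ then (1 : ℤ) else 0) = 0 := by
      rw [if_neg]; exact fun h => hmono (hFrE.1 h).1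
    rw [hL]
    refine (Finset.sum_eq_zero fun S hS => ?_).symm
    rw [if_neg (fun hf => hmono ((hFr S).1 hf).1), mul_zero]
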